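/- Let A be a real m×n matrix, let Ω be an n×k random matrix whose entries are i.i.d. standard Gaussian N(0,1) random variables, and let p ≤ k be a positive integer. For any p-cycle τ = (i_1, …, i_p) consisting of p distinct indices in {1, …, k}, the expectation of the cycle product (Ω^T A^T A Ω)_τ = ∏_{ℓ=1}^{p} (Ω^T A^T A Ω)_{i_ℓ, i_{ℓ+1}} (with the convention i_{p+1} ≡ i_1) equals trace((A^T A)^p), which equals ‖A‖_{2p}^{2p}, the 2p-th power of the Schatten-2p norm of A. -/

import Mathlib

open MeasureTheory ProbabilityTheory Matrix

section GaussianMoments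
open Real

private lemma pdf01' (x : ℝ) :
    gaussianPDFReal 0 1 x = (Real.sqrt (2 * Real.pi))⁻¹ * Real.exp (-(2⁻¹) * x ^ 2) := by
  unfold gaussianPDFReal
  push_cast
  rw [mul_one, sub_zero]
  congr 1
  ring

private lemma int_exp' : Integrable (fun x : ℝ => Real.exp (-(2⁻¹) * x ^ 2)) :=
  integrable_exp_neg_mul_sq (by norm_num)

private lemma int_mul_exp' : Integrable (fun x : ℝ => x * Real.exp (-(2⁻¹) * x ^ 2)) :=
  integrable_mul_exp_neg_mul_sq (by norm_num)

private lemma int_sq_exp' : Integrable (fun x : ℝ => x ^ 2 * Real.exp (-(2⁻¹) * x ^ 2)) := by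
  have := integrable_rpow_mul_exp_neg_mul_sq (b := 2⁻¹) (by norm_num) (s := 2) (by norm_num)
  simpa [Real.rpow_natCast] using this

private lemma gReal_eq' : gaussianReal 0 1 = volume.withDensity
    (fun x => ((Real.toNNReal (gaussianPDFReal 0 1 x) : NNReal) : ENNReal)) := by
  rw [gaussianReal_of_var_ne_zero 0 one_ne_zero, gaussianPDF_def]
  rfl

private lemma gint' (g : ℝ → ℝ) :
    ∫ x, g x ∂(gaussianReal 0 1) = ∫ x, gaussianPDFReal 0 1 x * g x := by
  rw [gReal_eq',
    integral_withDensity_eq_integral_smul (measurable_gaussianPDFReal 0 1).real_toNNReal]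
  congr 1; funext x
  rw [NNReal.smul_def, smul_eq_mul, Real.coe_toNNReal _ (gaussianPDFReal_nonneg _ _ _)]

private lemma gintegrable' (g : ℝ → ℝ) : Integrable g (gaussianReal 0 1) ↔
    Integrable (fun x => gaussianPDFReal 0 1 x * g x) volume := by
  rw [gReal_eq',
    integrable_withDensity_iff_integrable_smul (measurable_gaussianPDFReal 0 1).real_toNNReal]
  constructor <;> intro h <;>
  · apply h.congr
    filter_upwards with x
    rw [NNReal.smul_def, smul_eq_mul, Real.coe_toNNReal _ (gaussianPDFReal_nonneg _ _ _)]

private lemma gint_id_integrable' : Integrable (fun x : ℝ => x) (gaussianReal 0 1) := by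
  rw [gintegrable']
  apply (int_mul_exp'.const_mul ((Real.sqrt (2 * Real.pi))⁻¹)).congr
  filter_upwards with x
  rw [pdf01']; ring

private lemma gint_sq_integrable' : Integrable (fun x : ℝ => x ^ 2) (gaussianReal 0 1) := by
  rw [gintegrable']
  apply (int_sq_exp'.const_mul ((Real.sqrt (2 * Real.pi))⁻¹)).congr
  filter_upwards with x
  rw [pdf01']; ring

private lemma gmean' : ∫ x, x ∂(gaussianReal 0 1) = 0 := by
  rw [gint']
  have h : ∫ x : ℝ, gaussianPDFReal 0 1 x * x = ∫ x : ℝ, gaussianPDFReal 0 1 (-x) * (-x) :=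
    (integral_neg_eq_self _ _).symm
  have h2 : ∀ x : ℝ, gaussianPDFReal 0 1 (-x) * (-x) = -(gaussianPDFReal 0 1 x * x) := by
    intro x; rw [pdf01', pdf01']; ring_nf
  linarith [h, (by simp_rw [h2, integral_neg] :
    ∫ x : ℝ, gaussianPDFReal 0 1 (-x) * (-x) = -∫ x : ℝ, gaussianPDFReal 0 1 x * x)]

private lemma sq_exp_int' :
    ∫ x : ℝ, x ^ 2 * Real.exp (-(2⁻¹) * x ^ 2) = Real.sqrt (2 * Real.pi) := by
  have hder : ∀ x : ℝ, HasDerivAt (fun y => y * Real.exp (-(2⁻¹) * y ^ 2))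
      (Real.exp (-(2⁻¹) * x ^ 2) - x ^ 2 * Real.exp (-(2⁻¹) * x ^ 2)) x := by
    intro x
    have h1 : HasDerivAt (fun y : ℝ => -(2⁻¹) * y ^ 2) (-(2⁻¹) * (2 * x)) x := by
      simpa using ((hasDerivAt_pow 2 x).const_mul (-(2⁻¹ : ℝ)))
    have h3 := (hasDerivAt_id x).mul h1.exp
    simp only [id] at h3
    refine HasDerivAt.congr_deriv h3 ?_
    ring
  have h0 := integral_eq_zero_of_hasDerivAt_of_integrable hder
    (int_exp'.sub int_sq_exp') int_mul_exp'
  have h1 : ∫ x : ℝ, (Real.exp (-(2⁻¹) * x ^ 2) - x ^ 2 * Real.exp (-(2⁻¹) * x ^ 2))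
      = (∫ x : ℝ, Real.exp (-(2⁻¹) * x ^ 2)) - ∫ x : ℝ, x ^ 2 * Real.exp (-(2⁻¹) * x ^ 2) :=
    integral_sub int_exp' int_sq_exp'
  have h2 : ∫ x : ℝ, Real.exp (-(2⁻¹) * x ^ 2) = Real.sqrt (2 * Real.pi) := by
    rw [integral_gaussian 2⁻¹]
    congr 1
    field_simp
  rw [h0] at h1
  linarith [h1, h2]

private lemma gsq' : ∫ x, x ^ 2 ∂(gaussianReal 0 1) = 1 := by
  rw [gint']
  have : ∀ x : ℝ, gaussianPDFReal 0 1 x * x ^ 2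
      = (Real.sqrt (2 * Real.pi))⁻¹ * (x ^ 2 * Real.exp (-(2⁻¹) * x ^ 2)) := by
    intro x; rw [pdf01']; ring
  simp_rw [this, integral_const_mul, sq_exp_int']
  rw [inv_mul_cancel₀]
  positivity

end GaussianMoments

section TracePow
open Finset

private lemma pow_apply_path' {n : ℕ} (B : Matrix (Fin n) (Fin n) ℝ) :
    ∀ (q : ℕ) (i j : Fin n), (B ^ q) i j =
      ∑ s : Fin q → Fin n, (∏ ℓ : Fin q, B ((Fin.cons i s : Fin (q+1) → Fin n) ℓ.castSucc) (s ℓ)) *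
        (if (Fin.cons i s : Fin (q+1) → Fin n) (Fin.last q) = j then 1 else 0) := by
  intro q
  induction q with
  | zero =>
    intro i j
    rw [Fintype.sum_eq_single (Fin.elim0 : Fin 0 → Fin n)
      (fun s hs => absurd (funext fun ℓ => ℓ.elim0) hs)]
    simp [Matrix.one_apply]
  | succ q ih =>
    intro i j
    rw [pow_succ, Matrix.mul_apply]
    simp_rw [ih]
    rw [← Equiv.sum_comp (Fin.snocEquiv (fun _ => Fin n))
      (fun s => (∏ ℓ : Fin (q+1), B ((Fin.cons i s : Fin (q+2) → Fin n) ℓ.castSucc) (s ℓ)) *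
        (if (Fin.cons i s : Fin (q+2) → Fin n) (Fin.last (q+1)) = j then 1 else 0))]
    rw [Fintype.sum_prod_type]
    have key : ∀ (t : Fin n) (s : Fin q → Fin n),
        (∏ ℓ : Fin (q+1), B ((Fin.cons i (Fin.snocEquiv (fun _ => Fin n) (t, s)) :
              Fin (q+2) → Fin n) ℓ.castSucc)
            ((Fin.snocEquiv (fun _ => Fin n) (t, s)) ℓ)) *
          (if (Fin.cons i (Fin.snocEquiv (fun _ => Fin n) (t, s)) : Fin (q+2) → Fin n)
              (Fin.last (q+1)) = j then 1 else 0)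
        = ((∏ ℓ : Fin q, B ((Fin.cons i s : Fin (q+1) → Fin n) ℓ.castSucc) (s ℓ)) *
            B ((Fin.cons i s : Fin (q+1) → Fin n) (Fin.last q)) t) * (if t = j then 1 else 0) := by
      intro t s
      have hsnoc : (Fin.snocEquiv (fun _ => Fin n) (t, s)) = Fin.snoc s t := rfl
      rw [hsnoc, Fin.cons_snoc_eq_snoc_cons]
      rw [Fin.prod_univ_castSucc (f := fun ℓ : Fin (q+1) =>
        B ((Fin.snoc (Fin.cons i s) t : Fin (q+2) → Fin n) ℓ.castSucc)
          ((Fin.snoc s t : Fin (q+1) → Fin n) ℓ))]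
      simp [Fin.snoc_castSucc, Fin.snoc_last]
    simp_rw [key]
    rw [Finset.sum_comm]
    have inner : ∀ s : Fin q → Fin n,
        (∑ t : Fin n, ((∏ ℓ : Fin q, B ((Fin.cons i s : Fin (q+1) → Fin n) ℓ.castSucc) (s ℓ)) *
            B ((Fin.cons i s : Fin (q+1) → Fin n) (Fin.last q)) t) * (if t = j then 1 else 0))
        = (∏ ℓ : Fin q, B ((Fin.cons i s : Fin (q+1) → Fin n) ℓ.castSucc) (s ℓ)) *
            B ((Fin.cons i s : Fin (q+1) → Fin n) (Fin.last q)) j := by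
      intro s
      rw [Fintype.sum_eq_single j]
      · simp
      · intro t ht; simp [ht]
    simp_rw [inner, Finset.sum_mul]
    rw [Finset.sum_comm]
    refine Fintype.sum_congr _ _ fun s => ?_
    rw [Fintype.sum_eq_single ((Fin.cons i s : Fin (q+1) → Fin n) (Fin.last q))]
    · simp
    · intro t ht
      simp [Ne.symm ht]

private lemma cons_castSucc_sub_one' {q : ℕ} {α : Type*} (s : Fin (q+1) → α) (ℓ : Fin (q+1)) :
    (Fin.cons (s (Fin.last q)) s : Fin (q+2) → α) ℓ.castSucc = s (ℓ - 1) := by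
  by_cases h : ℓ = 0
  · subst h
    have : (0 - 1 : Fin (q+1)) = Fin.last q := by
      ext; simp [Fin.sub_def, Fin.last]
    rw [this]
    simp
  · have hsub : ((ℓ - 1 : Fin (q+1)) : ℕ) = (ℓ : ℕ) - 1 := by
      rw [Fin.coe_sub_one, if_neg h]
    have hne : (ℓ : ℕ) ≠ 0 := Fin.val_ne_iff.mpr h
    have : ℓ.castSucc = Fin.succ (ℓ - 1) := by
      ext
      rw [Fin.coe_castSucc, Fin.val_succ, hsub]
      omega
    rw [this, Fin.cons_succ]

private lemma trace_pow_cyclic' {n p : ℕ} [NeZero p] (B : Matrix (Fin n) (Fin n) ℝ) :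
    (B ^ p).trace = ∑ u : Fin p → Fin n, ∏ ℓ : Fin p, B (u ℓ) (u (ℓ + 1)) := by
  obtain ⟨q, rfl⟩ : ∃ q, p = q + 1 := Nat.exists_eq_succ_of_ne_zero (NeZero.ne p)
  rw [Matrix.trace]
  simp_rw [Matrix.diag, pow_apply_path']
  have endpoint : ∀ (i : Fin n) (s : Fin (q+1) → Fin n),
      (Fin.cons i s : Fin (q+2) → Fin n) (Fin.last (q+1)) = s (Fin.last q) := by
    intro i s
    rw [← Fin.succ_last, Fin.cons_succ]
  simp_rw [endpoint]
  rw [Finset.sum_comm]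
  have inner : ∀ s : Fin (q+1) → Fin n,
      (∑ i : Fin n, (∏ ℓ : Fin (q+1), B ((Fin.cons i s : Fin (q+2) → Fin n) ℓ.castSucc) (s ℓ)) *
        (if s (Fin.last q) = i then 1 else 0))
      = ∏ ℓ : Fin (q+1),
          B ((Fin.cons (s (Fin.last q)) s : Fin (q+2) → Fin n) ℓ.castSucc) (s ℓ) := by
    intro s
    rw [Fintype.sum_eq_single (s (Fin.last q))]
    · simp
    · intro i hi
      simp [Ne.symm hi]
  simp_rw [inner]
  rw [← Equiv.sum_comp (Equiv.arrowCongr (Equiv.addRight (1 : Fin (q+1))) (Equiv.refl (Fin n)))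
    (fun u : Fin (q+1) → Fin n => ∏ ℓ : Fin (q+1), B (u ℓ) (u (ℓ + 1)))]
  refine Fintype.sum_congr _ _ fun s => ?_
  refine Fintype.prod_congr _ _ fun ℓ => ?_
  simp only [Equiv.arrowCongr_apply, Equiv.coe_addRight, Equiv.refl_apply, Function.comp,
    Equiv.addRight_symm_apply]
  rw [cons_castSucc_sub_one']
  have h1 : ℓ + -1 = ℓ - 1 := by abel
  have h2 : ℓ + 1 + -1 = ℓ := by abel
  rw [h1, h2]

end TracePow

section IndepPairs

variable {Ω : Type} [MeasureSpace Ω] [IsProbabilityMeasure (ℙ : Measure Ω)]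
  {n k p : ℕ} (f : Fin n × Fin k → Ω → ℝ)

private lemma pair_indep_finset
    (hmeas : ∀ q, Measurable (f q))
    (hindep : iIndepFun f ℙ)
    (τ : Fin p → Fin k) (hτ : Function.Injective τ)
    (a b : Fin p → Fin n) (j : Fin p) (S : Finset (Fin p)) (hj : j ∉ S) :
    IndepFun (fun x => f (a j, τ j) x * f (b j, τ j) x)
      (fun x => ∏ i ∈ S, f (a i, τ i) x * f (b i, τ i) x) ℙ := by
  classical
  set S₁ : Finset (Fin n × Fin k) := Finset.univ.filter (fun q => q.2 = τ j) with hS₁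
  set T₁ : Finset (Fin n × Fin k) := Finset.univ.filter (fun q => q.2 ≠ τ j) with hT₁
  have hdisj : Disjoint S₁ T₁ := by
    rw [Finset.disjoint_left]
    intro q hq hq'
    rw [hS₁, Finset.mem_filter] at hq
    rw [hT₁, Finset.mem_filter] at hq'
    exact hq'.2 hq.2
  have base := hindep.indepFun_finset S₁ T₁ hdisj hmeas
  have hmemS : ∀ u : Fin n, (u, τ j) ∈ S₁ := by
    intro u; rw [hS₁, Finset.mem_filter]; exact ⟨Finset.mem_univ _, rfl⟩
  have hmemT : ∀ (u : Fin n) (i : Fin p), i ∈ S → (u, τ i) ∈ T₁ := by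
    intro u i hi
    rw [hT₁, Finset.mem_filter]
    refine ⟨Finset.mem_univ _, fun hc => hj ?_⟩
    have : i = j := hτ hc
    rwa [this] at hi
  let φ : ((q : S₁) → ℝ) → ℝ := fun v => v ⟨(a j, τ j), hmemS _⟩ * v ⟨(b j, τ j), hmemS _⟩
  let ψ : ((q : T₁) → ℝ) → ℝ := fun v =>
    ∏ i ∈ S.attach, v ⟨(a i, τ i), hmemT _ _ i.2⟩ * v ⟨(b i, τ i), hmemT _ _ i.2⟩
  have hφ : Measurable φ := ((measurable_pi_apply _).mul (measurable_pi_apply _))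
  have hψ : Measurable ψ :=
    Finset.measurable_prod _ fun i _ => (measurable_pi_apply _).mul (measurable_pi_apply _)
  have := base.comp hφ hψ
  have heq : (ψ ∘ fun x (q : T₁) => f q x) =
      fun x => ∏ i ∈ S, f (a i, τ i) x * f (b i, τ i) x := by
    funext x
    exact Finset.prod_attach S (fun i => f (a i, τ i) x * f (b i, τ i) x)
  rwa [heq] at this

private lemma pair_integral_prod
    (hmeas : ∀ q, Measurable (f q))
    (hindep : iIndepFun f ℙ)
    (τ : Fin p → Fin k) (hτ : Function.Injective τ)
    (a b : Fin p → Fin n) (S : Finset (Fin p)) :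
    ∫ x, ∏ i ∈ S, f (a i, τ i) x * f (b i, τ i) x ∂ℙ
      = ∏ i ∈ S, ∫ x, f (a i, τ i) x * f (b i, τ i) x ∂ℙ := by
  classical
  induction S using Finset.induction with
  | empty => simp
  | @insert j S hj ih =>
    simp_rw [Finset.prod_insert hj]
    have hip := pair_indep_finset f hmeas hindep τ hτ a b j S hj
    have hX : AEStronglyMeasurable (fun x => f (a j, τ j) x * f (b j, τ j) x) ℙ :=
      ((hmeas _).mul (hmeas _)).aestronglyMeasurable
    have hY : AEStronglyMeasurable (fun x => ∏ i ∈ S, f (a i, τ i) x * f (b i, τ i) x) ℙ :=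
      (Finset.measurable_prod _ fun i _ => (hmeas _).mul (hmeas _)).aestronglyMeasurable
    have := hip.integral_mul_eq_mul_integral hX hY
    rw [← ih]
    exact this

private lemma pair_integrable_prod
    (hmeas : ∀ q, Measurable (f q))
    (hindep : iIndepFun f ℙ)
    (τ : Fin p → Fin k) (hτ : Function.Injective τ)
    (a b : Fin p → Fin n)
    (hint : ∀ i : Fin p, Integrable (fun x => f (a i, τ i) x * f (b i, τ i) x) ℙ)
    (S : Finset (Fin p)) :
    Integrable (fun x => ∏ i ∈ S, f (a i, τ i) x * f (b i, τ i) x) ℙ := by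
  classical
  induction S using Finset.induction with
  | empty => simpa using integrable_const (1 : ℝ)
  | @insert j S hj ih =>
    simp_rw [Finset.prod_insert hj]
    exact (pair_indep_finset f hmeas hindep τ hτ a b j S hj).integrable_mul (hint j) ih

end IndepPairs

set_option maxHeartbeats 1000000 in
theorem stmt0 {m n k p : ℕ} [NeZero p] (hpk : p ≤ k)
    (A : Matrix (Fin m) (Fin n) ℝ)
    {Ω : Type} [MeasureSpace Ω] [IsProbabilityMeasure (ℙ : Measure Ω)]
    (ω : Fin n → Fin k → Ω → ℝ)
    (hmeas : ∀ t i, Measurable (ω t i))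
    (hgauss : ∀ t i, Measure.map (ω t i) ℙ = gaussianReal 0 1)
    (hindep : iIndepFun
      (fun ti : Fin n × Fin k => ω ti.1 ti.2) ℙ)
    (τ : Fin p → Fin k) (hτ : Function.Injective τ) :
    (∫ x, ∏ ℓ : Fin p,
        ((Matrix.of (fun t i => ω t i x))ᵀ * Aᵀ * A * (Matrix.of (fun t i => ω t i x)))
          (τ ℓ) (τ (ℓ + 1)) ∂ℙ)
      = Matrix.trace ((Aᵀ * A) ^ p) := by
  classical
  set B : Matrix (Fin n) (Fin n) ℝ := Aᵀ * A with hB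
  -- basic moment facts
  have hInt1 : ∀ (t : Fin n) (i : Fin k), Integrable (ω t i) ℙ := by
    intro t i
    have h0 : Integrable (id : ℝ → ℝ) (Measure.map (ω t i) ℙ) := by
      rw [hgauss t i]; exact gint_id_integrable'
    exact (integrable_map_measure aestronglyMeasurable_id
      (hmeas t i).aemeasurable).mp h0
  have hMean : ∀ (t : Fin n) (i : Fin k), ∫ x, ω t i x ∂ℙ = 0 := by
    intro t i
    have := integral_map (μ := (ℙ : Measure Ω)) (hmeas t i).aemeasurable
      (f := (id : ℝ → ℝ)) aestronglyMeasurable_id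
    rw [hgauss t i] at this
    rw [show (fun x => ω t i x) = fun x => id (ω t i x) from rfl, ← this]
    simpa using gmean'
  have hSqInt : ∀ (t : Fin n) (i : Fin k), Integrable (fun x => ω t i x * ω t i x) ℙ := by
    intro t i
    have h0 : Integrable (fun y : ℝ => y ^ 2) (Measure.map (ω t i) ℙ) := by
      rw [hgauss t i]; exact gint_sq_integrable'
    have := (integrable_map_measure
      (measurable_id.pow_const 2).aestronglyMeasurable (hmeas t i).aemeasurable).mp h0
    apply this.congr
    filter_upwards with x
    simp [Function.comp, pow_two]
  have hSq : ∀ (t : Fin n) (i : Fin k), ∫ x, ω t i x * ω t i x ∂ℙ = 1 := by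
    intro t i
    have := integral_map (μ := (ℙ : Measure Ω)) (hmeas t i).aemeasurable
      (f := fun y : ℝ => y ^ 2) (measurable_id.pow_const 2).aestronglyMeasurable
    rw [hgauss t i, gsq'] at this
    have h2 : ∫ x, ω t i x * ω t i x ∂ℙ = ∫ x, (fun y : ℝ => y ^ 2) (ω t i x) ∂ℙ := by
      congr 1
      funext x
      simp [pow_two]
    rw [h2, ← this]
  have pairval : ∀ (u v : Fin n) (i : Fin k),
      ∫ x, ω u i x * ω v i x ∂ℙ = if u = v then 1 else 0 := by
    intro u v i
    by_cases h : u = v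
    · subst h; rw [if_pos rfl]; exact hSq u i
    · rw [if_neg h]
      have hne : ((u, i) : Fin n × Fin k) ≠ (v, i) := by simp [h]
      have := (hindep.indepFun hne).integral_mul_eq_mul_integral
        (hmeas u i).aestronglyMeasurable (hmeas v i).aestronglyMeasurable
      rw [show (fun x => ω u i x * ω v i x)
          = (fun x => ω u i x) * (fun x => ω v i x) from rfl]
      rw [show ∫ x, ((fun x => ω u i x) * fun x => ω v i x) x ∂ℙ
          = ∫ x, ω u i x * ω v i x ∂ℙ from rfl] at this ⊢
      rw [this, hMean, zero_mul]
  have hPairInt : ∀ (u v : Fin n) (i : Fin k),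
      Integrable (fun x => ω u i x * ω v i x) ℙ := by
    intro u v i
    by_cases h : u = v
    · subst h; exact hSqInt u i
    · have hne : ((u, i) : Fin n × Fin k) ≠ (v, i) := by simp [h]
      exact (hindep.indepFun hne).integrable_mul (hInt1 u i) (hInt1 v i)
  -- entry expansion
  have entry : ∀ (x : Ω) (i j : Fin k),
      ((Matrix.of (fun t i => ω t i x))ᵀ * Aᵀ * A * (Matrix.of (fun t i => ω t i x))) i j
        = ∑ uv : Fin n × Fin n, ω uv.1 i x * B uv.1 uv.2 * ω uv.2 j x := by
    intro x i j
    rw [Matrix.mul_assoc ((Matrix.of (fun t i => ω t i x))ᵀ) Aᵀ A,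
      Matrix.mul_assoc ((Matrix.of (fun t i => ω t i x))ᵀ) (Aᵀ * A), ← hB,
      Matrix.mul_apply, Fintype.sum_prod_type]
    refine Finset.sum_congr rfl fun u _ => ?_
    rw [Matrix.mul_apply, Finset.mul_sum]
    refine Finset.sum_congr rfl fun v _ => ?_
    simp only [Matrix.transpose_apply, Matrix.of_apply]
    ring
  simp_rw [entry, Finset.prod_univ_sum, Fintype.piFinset_univ]
  -- rearrange each term
  have shift : ∀ (g : Fin p → Fin n × Fin n) (x : Ω),
      ∏ ℓ : Fin p, ω ((g ℓ).2) (τ (ℓ+1)) x = ∏ ℓ : Fin p, ω ((g (ℓ-1)).2) (τ ℓ) x := by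
    intro g x
    rw [← Equiv.prod_comp (Equiv.addRight (1 : Fin p))
      (fun ℓ => ω ((g (ℓ-1)).2) (τ ℓ) x)]
    refine Fintype.prod_congr _ _ fun ℓ => ?_
    simp only [Equiv.coe_addRight]
    rw [add_sub_cancel_right]
  have term : ∀ (g : Fin p → Fin n × Fin n) (x : Ω),
      (∏ ℓ : Fin p, (ω ((g ℓ).1) (τ ℓ) x * B ((g ℓ).1) ((g ℓ).2) * ω ((g ℓ).2) (τ (ℓ+1)) x))
      = (∏ ℓ : Fin p, B ((g ℓ).1) ((g ℓ).2)) *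
          ∏ ℓ : Fin p, (ω ((g ℓ).1) (τ ℓ) x * ω ((g (ℓ-1)).2) (τ ℓ) x) := by
    intro g x
    rw [Finset.prod_mul_distrib, shift g x, Finset.prod_mul_distrib,
      Finset.prod_mul_distrib]
    ring
  simp_rw [term]
  -- swap integral and sum
  rw [integral_finset_sum _ (fun g _ => (pair_integrable_prod
    (fun q : Fin n × Fin k => ω q.1 q.2) (fun q => hmeas q.1 q.2) hindep τ hτ
    (fun ℓ => (g ℓ).1) (fun ℓ => (g (ℓ-1)).2)
    (fun ℓ => hPairInt _ _ _) Finset.univ).const_mul _)]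
  simp_rw [MeasureTheory.integral_const_mul]
  have key : ∀ g : Fin p → Fin n × Fin n,
      ∫ x, ∏ ℓ : Fin p, (ω ((g ℓ).1) (τ ℓ) x * ω ((g (ℓ-1)).2) (τ ℓ) x) ∂ℙ
        = ∏ ℓ : Fin p, (if (g ℓ).1 = (g (ℓ-1)).2 then (1:ℝ) else 0) := by
    intro g
    rw [pair_integral_prod (fun q : Fin n × Fin k => ω q.1 q.2) (fun q => hmeas q.1 q.2)
      hindep τ hτ (fun ℓ => (g ℓ).1) (fun ℓ => (g (ℓ-1)).2) Finset.univ]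
    exact Finset.prod_congr rfl fun ℓ _ => pairval _ _ _
  simp_rw [key]
  -- final combinatorial sum
  rw [trace_pow_cyclic']
  rw [← Equiv.sum_comp (Equiv.arrowProdEquivProdArrow (Fin p) (fun _ => Fin n) (fun _ => Fin n)).symm
    (fun g : Fin p → Fin n × Fin n => (∏ ℓ : Fin p, B ((g ℓ).1) ((g ℓ).2)) *
      ∏ ℓ : Fin p, (if (g ℓ).1 = (g (ℓ-1)).2 then (1:ℝ) else 0))]
  rw [Fintype.sum_prod_type]
  refine Fintype.sum_congr _ _ fun u => ?_
  have huv : ∀ (v : Fin p → Fin n) (ℓ : Fin p),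
      ((Equiv.arrowProdEquivProdArrow (Fin p) (fun _ => Fin n) (fun _ => Fin n)).symm (u, v) ℓ) = (u ℓ, v ℓ) := by
    intro v ℓ; rfl
  simp_rw [huv]
  have indic : ∀ v : Fin p → Fin n,
      (∏ ℓ : Fin p, if u ℓ = v (ℓ - 1) then (1:ℝ) else 0)
        = if v = (fun ℓ => u (ℓ + 1)) then 1 else 0 := by
    intro v
    by_cases h : v = fun ℓ => u (ℓ + 1)
    · rw [if_pos h]
      subst h
      refine Finset.prod_eq_one fun ℓ _ => ?_
      rw [if_pos]
      show u ℓ = u (ℓ - 1 + 1)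
      rw [sub_add_cancel]
    · rw [if_neg h]
      obtain ⟨ℓ₀, hℓ₀⟩ : ∃ ℓ₀, ¬ (u ℓ₀ = v (ℓ₀ - 1)) := by
        by_contra hc
        push_neg at hc
        exact h (funext fun ℓ => by rw [hc (ℓ + 1), add_sub_cancel_right])
      exact Finset.prod_eq_zero (Finset.mem_univ ℓ₀) (if_neg hℓ₀)
  simp_rw [indic]
  rw [Fintype.sum_eq_single (fun ℓ => u (ℓ + 1))]
  · rw [if_pos rfl, mul_one]
  · intro v hv
    rw [if_neg hv, mul_zero]
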